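/- arXiv:2310.18900 — 3 statements merged into one kernel-verified Lean document; each statement's English description precedes it below -/
import Mathlib

section
/- Let p ≥ d + 2 be an integer. Then 2^d − 1 + Σ_{l=2}^∞ ((l+1)^d − l^d)/(2l−1)^p ≤ 2^d − 1 + 1/(2(p−d−1)) ≤ 2^p. -/
private lemma aux1 (n k : ℕ) (hn : 1 ≤ n) :
    (1:ℝ)/(2*(k:ℝ)+3)^(n+1) ≤ 1/(2*n) * (1/(2*(k:ℝ)+1)^n - 1/(2*(k:ℝ)+3)^n) := by
  set a : ℝ := 2*(k:ℝ)+1 with ha_def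
  set b : ℝ := 2*(k:ℝ)+3 with hb_def
  have ha : (1:ℝ) ≤ a := by simp [ha_def]
  have ha0 : (0:ℝ) < a := by linarith
  have hb0 : (0:ℝ) < b := by simp [hb_def]; positivity
  have hban : ∀ m : ℕ, a^m ≤ b^m := fun m => pow_le_pow_left₀ (le_of_lt ha0) (by simp [ha_def, hb_def]) m
  have hab : a ≤ b := by simp [ha_def, hb_def]
  have hn0 : (0:ℝ) < (n:ℝ) := by exact_mod_cast hn
  -- Bernoulli: b^n ≥ a^n + 2n a^n / a
  have hbern : a^n * (1 + n * (2/a)) ≤ b^n := by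
    have h1 : (1:ℝ) + n * (2/a) ≤ (1 + 2/a)^n := by
      apply one_add_mul_le_pow
      have : (0:ℝ) ≤ 2/a := by positivity
      linarith
    have h2 : b = a * (1 + 2/a) := by
      field_simp [hb_def, ha_def]; ring
    calc a^n * (1 + n * (2/a)) ≤ a^n * (1 + 2/a)^n := by
          apply mul_le_mul_of_nonneg_left h1 (by positivity)
      _ = (a * (1 + 2/a))^n := by rw [mul_pow]
      _ = b^n := by rw [← h2]
  have key : 2*(n:ℝ)*a^n ≤ (b^n - a^n) * b := by
    have h3 : 2*(n:ℝ)*a^n/a ≤ b^n - a^n := by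
      have := hbern
      have heq : a^n * (1 + n * (2/a)) = a^n + 2*(n:ℝ)*a^n/a := by
        field_simp
      rw [heq] at this
      linarith
    calc 2*(n:ℝ)*a^n = (2*(n:ℝ)*a^n/a) * a := by field_simp
      _ ≤ (b^n - a^n) * b := by
          apply mul_le_mul h3 hab (le_of_lt ha0)
          have := hban n
          linarith
  have hrhs : 1/(2*n) * (1/a^n - 1/b^n) = (b^n - a^n) / (2*n * (a^n * b^n)) := by
    field_simp
  rw [hrhs, div_le_div_iff₀ (by positivity) (by positivity)]
  have : b^(n+1) = b^n * b := by ring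
  rw [this]
  have hbn : (0:ℝ) < b^n := by positivity
  calc 1 * (2*(n:ℝ) * (a^n * b^n)) = (2*(n:ℝ)*a^n) * b^n := by ring
    _ ≤ ((b^n - a^n)*b) * b^n := by
        apply mul_le_mul_of_nonneg_right key (le_of_lt hbn)
    _ = (b^n - a^n) * (b^n * b) := by ring

private lemma aux2 (n : ℕ) (hn : 1 ≤ n) :
    HasSum (fun k : ℕ => (1:ℝ)/(2*(k:ℝ)+1)^n - 1/(2*(k:ℝ)+3)^n) 1 := by
  have hnn : ∀ k : ℕ, (0:ℝ) ≤ 1/(2*(k:ℝ)+1)^n - 1/(2*(k:ℝ)+3)^n := by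
    intro k
    have h1 : (0:ℝ) < (2*(k:ℝ)+1)^n := by positivity
    have h2 : (2*(k:ℝ)+1)^n ≤ (2*(k:ℝ)+3)^n := by
      apply pow_le_pow_left₀ (by positivity) (by linarith)
    have := one_div_le_one_div_of_le h1 h2
    linarith
  rw [hasSum_iff_tendsto_nat_of_nonneg hnn]
  set u : ℕ → ℝ := fun k => 1/(2*(k:ℝ)+1)^n with hu
  have hsum : ∀ N, ∑ k ∈ Finset.range N, ((1:ℝ)/(2*(k:ℝ)+1)^n - 1/(2*(k:ℝ)+3)^n)
      = u 0 - u N := by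
    intro N
    rw [← Finset.sum_range_sub' u N]
    apply Finset.sum_congr rfl
    intro i _
    simp only [hu]
    push_cast
    ring_nf
  simp only [hsum]
  have hu0 : u 0 = 1 := by simp [hu]
  rw [hu0]
  have h1 : Filter.Tendsto (fun k : ℕ => (2*(k:ℝ)+1)) Filter.atTop Filter.atTop := by
    apply Filter.tendsto_atTop_add_const_right
    exact (tendsto_natCast_atTop_atTop).const_mul_atTop two_pos
  have h2 : Filter.Tendsto (fun k : ℕ => (2*(k:ℝ)+1)^n) Filter.atTop Filter.atTop :=
    (Filter.tendsto_pow_atTop (by omega : n ≠ 0)).comp h1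
  have h3 : Filter.Tendsto u Filter.atTop (nhds 0) :=
    (tendsto_inv_atTop_zero.comp h2).congr (fun k => by simp [hu, one_div])
  have := Filter.Tendsto.const_sub (1:ℝ) h3
  simpa using this

/-- Key summation bound controlling aliasing error in Fourier interpolation. -/
theorem stmt_8 (d p : ℕ) (hd : 1 ≤ d) (hp : d + 2 ≤ p) :
    (2:ℝ) ^ d - 1 +
        (∑' l : ℕ, (((l:ℝ) + 2 + 1) ^ d - ((l:ℝ) + 2) ^ d) / (2 * ((l:ℝ) + 2) - 1) ^ p)
      ≤ (2:ℝ) ^ d - 1 + 1 / (2 * ((p:ℝ) - d - 1)) ∧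
    (2:ℝ) ^ d - 1 + 1 / (2 * ((p:ℝ) - d - 1)) ≤ 2 ^ p := by
  obtain ⟨n, hn, rfl⟩ : ∃ n : ℕ, 1 ≤ n ∧ p = d + 1 + n := ⟨p - d - 1, by omega, by omega⟩
  have hpd : ((d + 1 + n : ℕ):ℝ) - d - 1 = n := by push_cast; ring
  rw [hpd]
  have hn1 : (1:ℝ) ≤ n := by exact_mod_cast hn
  constructor
  · have hterm : ∀ k : ℕ, (((k:ℝ)+2+1)^d - ((k:ℝ)+2)^d)/(2*((k:ℝ)+2)-1)^(d+1+n)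
        ≤ 1/(2*(n:ℝ)) * (1/(2*(k:ℝ)+1)^n - 1/(2*(k:ℝ)+3)^n) := by
      intro k
      have hk0 : (0:ℝ) ≤ (k:ℝ) := Nat.cast_nonneg k
      have hden : 2*((k:ℝ)+2)-1 = 2*(k:ℝ)+3 := by ring
      have hb0 : (0:ℝ) < 2*(k:ℝ)+3 := by linarith
      have hbne : (2*(k:ℝ)+3) ≠ 0 := ne_of_gt hb0
      have hnum : ((k:ℝ)+2+1)^d - ((k:ℝ)+2)^d ≤ (2*(k:ℝ)+3)^d := by
        have h1 : ((k:ℝ)+2+1)^d ≤ (2*(k:ℝ)+3)^d :=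
          pow_le_pow_left₀ (by linarith) (by linarith) d
        have h2 : (0:ℝ) ≤ ((k:ℝ)+2)^d := by positivity
        linarith
      have step1 : (((k:ℝ)+2+1)^d - ((k:ℝ)+2)^d)/(2*((k:ℝ)+2)-1)^(d+1+n)
          ≤ (2*(k:ℝ)+3)^d / (2*(k:ℝ)+3)^(d+1+n) := by
        rw [hden]
        apply div_le_div_of_nonneg_right hnum ?_ |>.trans_eq rfl
        positivity
      have step2 : (2*(k:ℝ)+3)^d / (2*(k:ℝ)+3)^(d+1+n) = 1/(2*(k:ℝ)+3)^(n+1) := by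
        rw [show d+1+n = d+(n+1) by omega, pow_add]
        field_simp
      calc (((k:ℝ)+2+1)^d - ((k:ℝ)+2)^d)/(2*((k:ℝ)+2)-1)^(d+1+n)
          ≤ (2*(k:ℝ)+3)^d / (2*(k:ℝ)+3)^(d+1+n) := step1
        _ = 1/(2*(k:ℝ)+3)^(n+1) := step2
        _ ≤ 1/(2*(n:ℝ)) * (1/(2*(k:ℝ)+1)^n - 1/(2*(k:ℝ)+3)^n) := aux1 n k hn
    have hnn : ∀ k : ℕ, 0 ≤ (((k:ℝ)+2+1)^d - ((k:ℝ)+2)^d)/(2*((k:ℝ)+2)-1)^(d+1+n) := by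
      intro k
      have hk0 : (0:ℝ) ≤ (k:ℝ) := Nat.cast_nonneg k
      have hnum : (0:ℝ) ≤ ((k:ℝ)+2+1)^d - ((k:ℝ)+2)^d := by
        have := pow_le_pow_left₀ (by linarith : (0:ℝ) ≤ (k:ℝ)+2) (by linarith : (k:ℝ)+2 ≤ (k:ℝ)+2+1) d
        linarith
      have : (0:ℝ) < 2*((k:ℝ)+2)-1 := by linarith
      positivity
    have hS : HasSum (fun k : ℕ => 1/(2*(n:ℝ)) * (1/(2*(k:ℝ)+1)^n - 1/(2*(k:ℝ)+3)^n))
        (1/(2*(n:ℝ)) * 1) := (aux2 n hn).mul_left _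
    have hsum : Summable (fun k : ℕ =>
        (((k:ℝ)+2+1)^d - ((k:ℝ)+2)^d)/(2*((k:ℝ)+2)-1)^(d+1+n)) :=
      Summable.of_nonneg_of_le hnn hterm hS.summable
    have hle := Summable.tsum_le_tsum hterm hsum hS.summable
    rw [hS.tsum_eq, mul_one] at hle
    linarith
  · have h1 : (1:ℝ)/(2*(n:ℝ)) ≤ 1 := by
      rw [div_le_one (by positivity)]
      linarith
    have h2 : (2:ℝ)^d ≤ 2^(d+1+n) :=
      pow_le_pow_right₀ one_le_two (by omega)
    linarith
end

section
/- Let A₁ be Hermitian negative semidefinite and A₂ an arbitrary square matrix, h > 0. Then ‖∫₀ʰ∫₀ᵗ e^{A₁(h−t)} A₂ e^{A₁(t−s)} A₂ e^{A₁ s} ds dt − (h²/2) e^{A₁ h/2} A₂² e^{A₁ h/2}‖ ≤ (h³/4) ‖[A₂,A₁]‖ ‖A₂‖. -/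
open scoped Matrix.Norms.L2Operator ComplexOrder
open NormedSpace intervalIntegral

section TrotterHelpers

variable {n : Type*} [Fintype n] [DecidableEq n]


lemma base_abs (x : ℝ) : HasDerivAt (fun y : ℝ => y * |y| / 2) |x| x := by
  rcases lt_trichotomy x 0 with hx | hx | hx
  · have hd : HasDerivAt (fun y : ℝ => -(y * y) / 2) |x| x := by
      have := (((hasDerivAt_id x).mul (hasDerivAt_id x)).neg).div_const (2:ℝ)
      convert! this using 1
      rw [abs_of_neg hx]; simp only [id_eq]; ring
    apply hd.congr_of_eventuallyEq
    filter_upwards [Iio_mem_nhds hx] with y hy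
    rw [abs_of_neg hy]; ring
  · subst hx
    rw [hasDerivAt_iff_tendsto_slope]
    simp only [abs_zero]
    have h2' : Filter.Tendsto (fun y : ℝ => |y| / 2) (nhdsWithin 0 {(0:ℝ)}ᶜ) (nhds 0) := by
      have := ((continuous_abs.tendsto 0).div_const 2).mono_left
        (nhdsWithin_le_nhds (s := {(0:ℝ)}ᶜ))
      simpa using this
    apply h2'.congr'
    filter_upwards [self_mem_nhdsWithin] with y hy
    have hy0 : y ≠ 0 := hy
    rw [slope_def_field]
    field_simp
    ring
  · have hd : HasDerivAt (fun y : ℝ => y * y / 2) |x| x := by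
      have := ((hasDerivAt_id x).mul (hasDerivAt_id x)).div_const (2:ℝ)
      convert! this using 1
      rw [abs_of_pos hx]; simp only [id_eq]; ring
    apply hd.congr_of_eventuallyEq
    filter_upwards [Ioi_mem_nhds hx] with y hy
    rw [abs_of_pos hy]

lemma abs_antideriv (c x : ℝ) : HasDerivAt (fun y : ℝ => (y - c) * |y - c| / 2) |x - c| x := by
  have := (base_abs (x - c)).comp x ((hasDerivAt_id x).sub_const c)
  simpa [Function.comp_def] using this

lemma base_abs2 (x : ℝ) : HasDerivAt (fun y : ℝ => |y| ^ 3 / 3) (x * |x|) x := by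
  rcases lt_trichotomy x 0 with hx | hx | hx
  · have hd : HasDerivAt (fun y : ℝ => -(y * y * y) / 3) (x * |x|) x := by
      have := (((hasDerivAt_id x).mul (hasDerivAt_id x)).mul (hasDerivAt_id x)).neg.div_const (3:ℝ)
      convert! this using 1
      rw [abs_of_neg hx]; simp only [id_eq, Pi.mul_apply]; ring
    apply hd.congr_of_eventuallyEq
    filter_upwards [Iio_mem_nhds hx] with y hy
    rw [abs_of_neg hy]; ring
  · subst hx
    rw [hasDerivAt_iff_tendsto_slope]
    simp only [mul_zero, abs_zero, zero_mul]
    have h2' : Filter.Tendsto (fun y : ℝ => y * |y| / 3) (nhdsWithin 0 {(0:ℝ)}ᶜ) (nhds 0) := by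
      have := ((continuous_id.mul continuous_abs).div_const 3).tendsto (0:ℝ) |>.mono_left
        (nhdsWithin_le_nhds (s := {(0:ℝ)}ᶜ))
      simpa using this
    apply h2'.congr'
    filter_upwards [self_mem_nhdsWithin] with y hy
    have hy0 : y ≠ 0 := hy
    rw [slope_def_field]
    rw [show |y| ^ 3 = y ^ 2 * |y| by rw [← sq_abs]; ring]
    field_simp
    ring
  · have hd : HasDerivAt (fun y : ℝ => y * y * y / 3) (x * |x|) x := by
      have := (((hasDerivAt_id x).mul (hasDerivAt_id x)).mul (hasDerivAt_id x)).div_const (3:ℝ)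
      convert! this using 1
      rw [abs_of_pos hx]; simp; ring
    apply hd.congr_of_eventuallyEq
    filter_upwards [Ioi_mem_nhds hx] with y hy
    rw [abs_of_pos hy]; ring

lemma abs2_antideriv (c x : ℝ) :
    HasDerivAt (fun y : ℝ => |y - c| ^ 3 / 3) ((x - c) * |x - c|) x := by
  have := (base_abs2 (x - c)).comp x ((hasDerivAt_id x).sub_const c)
  simpa [Function.comp_def] using this

lemma integral_abs_sub (c a b : ℝ) :
    ∫ x in a..b, |x - c| = (b - c) * |b - c| / 2 - (a - c) * |a - c| / 2 := by
  have := intervalIntegral.integral_eq_sub_of_hasDerivAt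
    (f := fun y : ℝ => (y - c) * |y - c| / 2) (fun x _ => abs_antideriv c x)
    (((continuous_id.sub continuous_const).abs).intervalIntegrable a b)
  simpa using this

lemma integral_mul_abs_sub (c a b : ℝ) :
    ∫ x in a..b, (x - c) * |x - c| = |b - c| ^ 3 / 3 - |a - c| ^ 3 / 3 := by
  have := intervalIntegral.integral_eq_sub_of_hasDerivAt
    (f := fun y : ℝ => |y - c| ^ 3 / 3) (fun x _ => abs2_antideriv c x)
    (((continuous_id.sub continuous_const).mul
      ((continuous_id.sub continuous_const).abs)).intervalIntegrable a b)
  simpa using this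

lemma diag_norm_le {n : Type*} [Fintype n] [DecidableEq n] {d : n → ℂ} {c : ℝ}
    (hc : 0 ≤ c) (hd : ∀ i, ‖d i‖ ≤ c) : ‖Matrix.diagonal d‖ ≤ c := by
  rw [Matrix.l2_opNorm_def]
  apply ContinuousLinearMap.opNorm_le_bound _ hc
  intro x
  have h1 : ∀ (y : EuclideanSpace ℂ n), ‖y‖ = Real.sqrt (∑ i, ‖y i‖ ^ 2) :=
    fun y => EuclideanSpace.norm_eq y
  show ‖Matrix.toEuclideanLin (Matrix.diagonal d) x‖ ≤ _
  rw [h1, h1]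
  have h2 : ∀ i, (Matrix.toEuclideanLin (Matrix.diagonal d) x) i = d i * x i := by
    intro i
    rw [Matrix.toEuclideanLin_apply]
    exact Matrix.mulVec_diagonal d _ i
  have h3 : (∑ i, ‖(Matrix.toEuclideanLin (Matrix.diagonal d) x) i‖ ^ 2)
      ≤ c ^ 2 * ∑ i, ‖x i‖ ^ 2 := by
    rw [Finset.mul_sum]
    apply Finset.sum_le_sum
    intro i _
    rw [h2 i, norm_mul, mul_pow]
    gcongr
    exact hd i
  calc Real.sqrt (∑ i, ‖(Matrix.toEuclideanLin (Matrix.diagonal d) x) i‖ ^ 2)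
      ≤ Real.sqrt (c ^ 2 * ∑ i, ‖x i‖ ^ 2) := Real.sqrt_le_sqrt h3
    _ = c * Real.sqrt (∑ i, ‖x i‖ ^ 2) := by
        rw [Real.sqrt_mul (sq_nonneg c), Real.sqrt_sq hc]

lemma exp_norm_le_one {n : Type*} [Fintype n] [DecidableEq n] (A₁ : Matrix n n ℂ)
    (hA₁ : A₁.IsHermitian) (hA₁neg : (-A₁).PosSemidef) {x : ℝ} (hx : 0 ≤ x) :
    ‖exp (x • A₁)‖ ≤ 1 := by
  have hev : ∀ i, hA₁.eigenvalues i ≤ 0 := by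
    intro i
    have h1 := hA₁neg.re_dotProduct_nonneg (hA₁.eigenvectorBasis i)
    rw [Matrix.neg_mulVec, dotProduct_neg, map_neg] at h1
    rw [hA₁.eigenvalues_eq i]
    exact neg_nonneg.mp h1
  set U := hA₁.eigenvectorUnitary with hU
  set y : (Matrix n n ℂ)ˣ := Unitary.toUnits U with hy
  have hyc : (y : Matrix n n ℂ) = U := rfl
  have hyi : ((y⁻¹ : (Matrix n n ℂ)ˣ) : Matrix n n ℂ) = star (U : Matrix n n ℂ) := rfl
  have key : x • A₁ = (y : Matrix n n ℂ) * Matrix.diagonal (fun i => ((x * hA₁.eigenvalues i : ℝ) : ℂ)) * ((y⁻¹ : (Matrix n n ℂ)ˣ) : Matrix n n ℂ) := by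
    rw [hyc, hyi]
    conv_lhs => rw [hA₁.spectral_theorem, Unitary.conjStarAlgAut_apply]
    rw [← smul_mul_assoc, ← mul_smul_comm]
    congr 2
    ext i j
    by_cases hij : i = j
    · subst hij; simp [Complex.real_smul]
    · simp [Matrix.diagonal_apply_ne _ hij]
  rw [key, Matrix.exp_units_conj, Matrix.exp_diagonal, hyc, hyi]
  calc ‖(U : Matrix n n ℂ) * Matrix.diagonal (exp fun i => ((x * hA₁.eigenvalues i : ℝ) : ℂ))
        * star (U : Matrix n n ℂ)‖
      = ‖Matrix.diagonal (exp fun i => ((x * hA₁.eigenvalues i : ℝ) : ℂ))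
          * star (U : Matrix n n ℂ)‖ := by
        rw [mul_assoc]
        exact CStarRing.norm_coe_unitary_mul U _
    _ = ‖Matrix.diagonal (exp fun i => ((x * hA₁.eigenvalues i : ℝ) : ℂ))‖ := by
        rw [← Unitary.coe_star]
        exact CStarRing.norm_mul_coe_unitary _ _
    _ ≤ 1 := by
        rw [Pi.exp_def]
        apply diag_norm_le zero_le_one
        intro i
        rw [← Complex.exp_eq_exp_ℂ, Complex.norm_exp]
        rw [Real.exp_le_one_iff]
        simp only [Complex.ofReal_re]
        exact mul_nonpos_of_nonneg_of_nonpos hx (hev i)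

lemma hasDerivAt_expAff (A₁ : Matrix n n ℂ) (a b u : ℝ) :
    HasDerivAt (fun u : ℝ => exp ((a + u * b) • A₁))
      (b • (exp ((a + u * b) • A₁) * A₁)) u := by
  have h1 : HasDerivAt (fun v : ℝ => exp (v • A₁)) (exp ((a + u * b) • A₁) * A₁)
      (a + u * b) := hasDerivAt_exp_smul_const A₁ (a + u * b)
  have h2 : HasDerivAt (fun u : ℝ => a + u * b) b u := by
    simpa using ((hasDerivAt_id u).mul_const b).const_add a
  have h3 := HasDerivAt.scomp u h1 h2
  simpa [Function.comp_def] using h3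

lemma five_norm_le {a b c d e : Matrix n n ℂ} (ha : ‖a‖ ≤ 1) (hc : ‖c‖ ≤ 1) (he : ‖e‖ ≤ 1) :
    ‖a * b * c * d * e‖ ≤ ‖b‖ * ‖d‖ := by
  have h1 : ‖a * b‖ ≤ ‖b‖ :=
    (norm_mul_le a b).trans (mul_le_of_le_one_left (norm_nonneg b) ha)
  have h2 : ‖a * b * c‖ ≤ ‖b‖ :=
    (norm_mul_le _ c).trans ((mul_le_of_le_one_right (norm_nonneg _) hc).trans h1)
  have h3 : ‖a * b * c * d‖ ≤ ‖b‖ * ‖d‖ :=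
    (norm_mul_le _ d).trans (mul_le_mul_of_nonneg_right h2 (norm_nonneg d))
  exact (norm_mul_le _ e).trans
    ((mul_le_of_le_one_right (norm_nonneg _) he).trans h3)

lemma deriv_algebra (A₁ A₂ E1 E2 E3 : Matrix n n ℂ) (a b : ℝ)
    (h1 : A₁ * E2 = E2 * A₁) (h2 : A₁ * E3 = E3 * A₁) :
    (-a • (E1 * A₁) * A₂ * E2 + E1 * A₂ * ((a - b) • (E2 * A₁))) * A₂ * E3 +
      E1 * A₂ * E2 * A₂ * (b • (E3 * A₁))
    = a • (E1 * (A₂ * A₁ - A₁ * A₂) * E2 * A₂ * E3)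
      + b • (E1 * A₂ * E2 * (A₂ * A₁ - A₁ * A₂) * E3) := by
  have h1' : ∀ X : Matrix n n ℂ, E2 * (A₁ * X) = A₁ * (E2 * X) := fun X => by
    rw [← mul_assoc, ← h1, mul_assoc]
  have h2' : ∀ X : Matrix n n ℂ, E3 * (A₁ * X) = A₁ * (E3 * X) := fun X => by
    rw [← mul_assoc, ← h2, mul_assoc]
  simp only [neg_smul, neg_mul, smul_mul_assoc, mul_smul_comm, add_mul, sub_mul, mul_sub,
    mul_assoc, smul_sub]
  simp only [h1', h2', ← h2]
  module

lemma g_bound (A₁ A₂ : Matrix n n ℂ) (hA₁ : A₁.IsHermitian) (hA₁neg : (-A₁).PosSemidef)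
    (h : ℝ) {t s : ℝ} (hs0 : 0 ≤ s) (hst : s ≤ t) (hth : t ≤ h) :
    ‖exp ((h - t) • A₁) * A₂ * exp ((t - s) • A₁) * A₂ * exp (s • A₁)
      - exp ((h/2) • A₁) * A₂ * exp ((0:ℝ) • A₁) * A₂ * exp ((h/2) • A₁)‖ ≤
      (|t - h/2| + |s - h/2|) * (‖A₂ * A₁ - A₁ * A₂‖ * ‖A₂‖) := by
  set c : ℝ := h / 2 with hc
  set K : Matrix n n ℂ := A₂ * A₁ - A₁ * A₂ with hK
  have hh0 : 0 ≤ h := hs0.trans (hst.trans hth)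
  have hc0 : 0 ≤ c := by rw [hc]; positivity
  have hcomm : ∀ x : ℝ, A₁ * exp (x • A₁) = exp (x • A₁) * A₁ := fun x =>
    (((Commute.refl A₁).smul_right x).exp_right).eq
  set φ : ℝ → Matrix n n ℂ := fun u =>
    exp ((h - c + u * -(t - c)) • A₁) * A₂ * exp ((0 + u * (t - c - (s - c))) • A₁)
      * A₂ * exp ((c + u * (s - c)) • A₁) with hφ
  set D : ℝ → Matrix n n ℂ := fun u =>
    (t - c) • (exp ((h - c + u * -(t - c)) • A₁) * K
        * exp ((0 + u * (t - c - (s - c))) • A₁) * A₂ * exp ((c + u * (s - c)) • A₁))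
    + (s - c) • (exp ((h - c + u * -(t - c)) • A₁) * A₂
        * exp ((0 + u * (t - c - (s - c))) • A₁) * K * exp ((c + u * (s - c)) • A₁)) with hD
  have hder : ∀ u : ℝ, HasDerivAt φ (D u) u := by
    intro u
    have m := ((((hasDerivAt_expAff A₁ (h - c) (-(t - c)) u).mul_const A₂).mul
        (hasDerivAt_expAff A₁ 0 (t - c - (s - c)) u)).mul_const A₂).mul
        (hasDerivAt_expAff A₁ c (s - c) u)
    have alg := deriv_algebra A₁ A₂ (exp ((h - c + u * -(t - c)) • A₁))
        (exp ((0 + u * (t - c - (s - c))) • A₁)) (exp ((c + u * (s - c)) • A₁))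
        (t - c) (s - c) (hcomm _) (hcomm _)
    simp only [hφ, hD, hK]
    exact alg ▸ m
  have bound : ∀ u ∈ Set.Icc (0:ℝ) 1, ‖D u‖ ≤ (|t - c| + |s - c|) * (‖K‖ * ‖A₂‖) := by
    rintro u ⟨hu0, hu1⟩
    have hch : c ≤ h := by rw [hc]; linarith
    have hx1 : 0 ≤ h - c + u * -(t - c) := by
      nlinarith [mul_nonneg (sub_nonneg.2 hu1) (sub_nonneg.2 hch),
        mul_nonneg hu0 (sub_nonneg.2 hth)]
    have hx2 : 0 ≤ 0 + u * (t - c - (s - c)) := by nlinarith [mul_nonneg hu0 (sub_nonneg.2 hst)]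
    have hx3 : 0 ≤ c + u * (s - c) := by
      nlinarith [mul_nonneg (sub_nonneg.2 hu1) hc0, mul_nonneg hu0 hs0]
    have n1 := exp_norm_le_one A₁ hA₁ hA₁neg hx1
    have n2 := exp_norm_le_one A₁ hA₁ hA₁neg hx2
    have n3 := exp_norm_le_one A₁ hA₁ hA₁neg hx3
    have b1 := five_norm_le (b := K) (d := A₂) n1 n2 n3
    have b2 := five_norm_le (b := A₂) (d := K) n1 n2 n3
    calc ‖D u‖ ≤ ‖(t - c) • (exp ((h - c + u * -(t - c)) • A₁) * K
            * exp ((0 + u * (t - c - (s - c))) • A₁) * A₂ * exp ((c + u * (s - c)) • A₁))‖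
          + ‖(s - c) • (exp ((h - c + u * -(t - c)) • A₁) * A₂
            * exp ((0 + u * (t - c - (s - c))) • A₁) * K * exp ((c + u * (s - c)) • A₁))‖ :=
        norm_add_le _ _
      _ ≤ |t - c| * (‖K‖ * ‖A₂‖) + |s - c| * (‖A₂‖ * ‖K‖) := by
          rw [norm_smul, norm_smul, Real.norm_eq_abs, Real.norm_eq_abs]
          gcongr <;> first | exact b1 | exact b2 | exact abs_nonneg _
      _ = (|t - c| + |s - c|) * (‖K‖ * ‖A₂‖) := by ring
  have h0m : (0:ℝ) ∈ Set.Icc (0:ℝ) 1 := ⟨le_refl _, zero_le_one⟩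
  have h1m : (1:ℝ) ∈ Set.Icc (0:ℝ) 1 := ⟨zero_le_one, le_refl _⟩
  have key := (convex_Icc (0:ℝ) 1).norm_image_sub_le_of_norm_hasDerivWithin_le
    (fun u _ => (hder u).hasDerivWithinAt) bound h0m h1m
  have e1 : φ 1 = exp ((h - t) • A₁) * A₂ * exp ((t - s) • A₁) * A₂ * exp (s • A₁) := by
    rw [hφ]
    norm_num
  have e0 : φ 0 = exp (c • A₁) * A₂ * exp ((0:ℝ) • A₁) * A₂ * exp (c • A₁) := by
    rw [hφ]
    norm_num
    rw [show h - c = c by rw [hc]; ring]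
  rw [← e1, ← e0]
  calc ‖φ 1 - φ 0‖ ≤ (|t - c| + |s - c|) * (‖K‖ * ‖A₂‖) * ‖(1:ℝ) - 0‖ := key
    _ = (|t - c| + |s - c|) * (‖K‖ * ‖A₂‖) := by norm_num

end TrotterHelpers

/-- Midpoint-rule commutator bound for the second-order term in the Trotter expansion. -/
theorem stmt_10 {n : Type*} [Fintype n] [DecidableEq n]
    (A₁ A₂ : Matrix n n ℂ) (hA₁ : A₁.IsHermitian) (hA₁neg : (-A₁).PosSemidef)
    (h : ℝ) (hh : 0 < h) :
    ‖(∫ t in (0:ℝ)..h, ∫ s in (0:ℝ)..t,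
          exp ((h - t) • A₁) * A₂ * exp ((t - s) • A₁) * A₂ * exp (s • A₁))
        - (h ^ 2 / 2) • (exp ((h/2) • A₁) * A₂ ^ 2 * exp ((h/2) • A₁))‖ ≤
      h ^ 3 / 4 * ‖A₂ * A₁ - A₁ * A₂‖ * ‖A₂‖ := by
  set K : Matrix n n ℂ := A₂ * A₁ - A₁ * A₂ with hK
  set M : Matrix n n ℂ := exp ((h/2) • A₁) * A₂ ^ 2 * exp ((h/2) • A₁) with hM
  have hM' : M = exp ((h/2) • A₁) * A₂ * exp ((0:ℝ) • A₁) * A₂ * exp ((h/2) • A₁) := by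
    rw [hM, zero_smul, exp_zero, mul_one, sq, ← mul_assoc]
  have gcont : Continuous (Function.uncurry fun t s : ℝ =>
      exp ((h - t) • A₁) * A₂ * exp ((t - s) • A₁) * A₂ * exp (s • A₁)) := by
    have expc : ∀ f : ℝ × ℝ → ℝ, Continuous f →
        Continuous fun p : ℝ × ℝ => exp (f p • A₁) := fun f hf =>
      (continuous_iff_continuousAt.2 fun t => (hasDerivAt_exp_smul_const A₁ t).continuousAt).comp hf
    show Continuous fun p : ℝ × ℝ =>
      exp ((h - p.1) • A₁) * A₂ * exp ((p.1 - p.2) • A₁) * A₂ * exp (p.2 • A₁)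
    exact ((((expc _ (continuous_const.sub continuous_fst)).mul continuous_const).mul
      (expc _ (continuous_fst.sub continuous_snd))).mul continuous_const).mul
      (expc _ continuous_snd)
  have Fcont : Continuous fun t : ℝ => ∫ s in (0:ℝ)..t,
      exp ((h - t) • A₁) * A₂ * exp ((t - s) • A₁) * A₂ * exp (s • A₁) :=
    continuous_parametric_intervalIntegral_of_continuous gcont continuous_id
  have hFint : IntervalIntegrable (fun t : ℝ => ∫ s in (0:ℝ)..t,
      exp ((h - t) • A₁) * A₂ * exp ((t - s) • A₁) * A₂ * exp (s • A₁))
      MeasureTheory.volume 0 h := Fcont.intervalIntegrable _ _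
  have htM : IntervalIntegrable (fun t : ℝ => t • M) MeasureTheory.volume 0 h :=
    (continuous_id.smul continuous_const).intervalIntegrable _ _
  have hsplit : (∫ t in (0:ℝ)..h, ∫ s in (0:ℝ)..t,
        exp ((h - t) • A₁) * A₂ * exp ((t - s) • A₁) * A₂ * exp (s • A₁))
        - (h ^ 2 / 2) • M
      = ∫ t in (0:ℝ)..h, ((∫ s in (0:ℝ)..t,
        exp ((h - t) • A₁) * A₂ * exp ((t - s) • A₁) * A₂ * exp (s • A₁)) - t • M) := by
    rw [intervalIntegral.integral_sub hFint htM, intervalIntegral.integral_smul_const,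
      integral_id]
    norm_num
  rw [hsplit]
  set B : ℝ → ℝ := fun t => (t - 0) * (|t - h/2| * (‖K‖ * ‖A₂‖))
    + ((t - h/2) * |t - h/2| / 2 - (0 - h/2) * |0 - h/2| / 2) * (‖K‖ * ‖A₂‖) with hB
  have hBeq : ∀ t : ℝ, (∫ s in (0:ℝ)..t, (|t - h/2| + |s - h/2|) * (‖K‖ * ‖A₂‖)) = B t := by
    intro t
    simp_rw [add_mul]
    rw [intervalIntegral.integral_add (intervalIntegrable_const)
        ((by apply Continuous.intervalIntegrable; fun_prop :
          IntervalIntegrable (fun s : ℝ => |s - h/2| * (‖K‖ * ‖A₂‖)) MeasureTheory.volume 0 t)),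
      intervalIntegral.integral_const, intervalIntegral.integral_mul_const, integral_abs_sub,
      smul_eq_mul, hB]
  have hinner : ∀ t ∈ Set.Ioc (0:ℝ) h, ‖(∫ s in (0:ℝ)..t,
      exp ((h - t) • A₁) * A₂ * exp ((t - s) • A₁) * A₂ * exp (s • A₁)) - t • M‖ ≤ B t := by
    intro t ht
    have hgint : IntervalIntegrable (fun s : ℝ =>
        exp ((h - t) • A₁) * A₂ * exp ((t - s) • A₁) * A₂ * exp (s • A₁))
        MeasureTheory.volume 0 t := by
      apply Continuous.intervalIntegrable
      have expc : ∀ f : ℝ → ℝ, Continuous f →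
          Continuous fun s : ℝ => exp (f s • A₁) := fun f hf =>
        (continuous_iff_continuousAt.2 fun t => (hasDerivAt_exp_smul_const A₁ t).continuousAt).comp hf
      exact (((continuous_const.mul continuous_const).mul
        (expc _ (continuous_const.sub continuous_id))).mul continuous_const).mul
        (expc _ continuous_id)
    have hBt0 : 0 ≤ B t := by
      rw [← hBeq t]
      exact intervalIntegral.integral_nonneg ht.1.le (fun u _ => by positivity)
    rw [show t • M = ∫ _ in (0:ℝ)..t, M by rw [intervalIntegral.integral_const, sub_zero],
      ← intervalIntegral.integral_sub hgint intervalIntegrable_const]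
    refine (intervalIntegral.norm_integral_le_of_norm_le ht.1.le
      (g := fun s => (|t - h/2| + |s - h/2|) * (‖K‖ * ‖A₂‖)) ?_ ?_).trans ?_
    · refine Filter.Eventually.of_forall ?_
      intro s hs
      rw [hM', hK]
      exact g_bound A₁ A₂ hA₁ hA₁neg h hs.1.le hs.2 ht.2
    · exact ((continuous_const.add (continuous_id.sub continuous_const).abs).mul
        continuous_const).intervalIntegrable _ _
    · rw [hBeq t]
  have hBcont : Continuous B := by
    rw [hB]; fun_prop
  refine le_trans (intervalIntegral.norm_integral_le_of_norm_le hh.le (g := B) ?_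
    (hBcont.intervalIntegrable _ _)) ?_
  · refine Filter.Eventually.of_forall ?_
    intro t ht
    exact hinner t ht
  · have h0c : |(0:ℝ) - h/2| = h/2 := by
      rw [abs_of_nonpos (by linarith)]; ring
    have hhc : |h - h/2| = h/2 := by
      rw [show h - h/2 = h/2 by ring, abs_of_nonneg (by linarith)]
    have heq : ∀ t : ℝ, B t = ((t - h/2) * |t - h/2|) * (3/2 * (‖K‖ * ‖A₂‖))
        + |t - h/2| * (h/2 * (‖K‖ * ‖A₂‖)) + (h/2 * (h/2) / 2 * (‖K‖ * ‖A₂‖)) := by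
      intro t
      rw [hB]
      simp only []
      rw [h0c]
      ring
    have hval : ∫ t in (0:ℝ)..h, B t = h ^ 3 / 4 * (‖K‖ * ‖A₂‖) := by
      simp_rw [heq]
      rw [intervalIntegral.integral_add (by apply Continuous.intervalIntegrable; fun_prop)
          (by apply Continuous.intervalIntegrable; fun_prop),
        intervalIntegral.integral_add (by apply Continuous.intervalIntegrable; fun_prop)
          (by apply Continuous.intervalIntegrable; fun_prop),
        intervalIntegral.integral_mul_const, intervalIntegral.integral_mul_const,
        intervalIntegral.integral_const, integral_mul_abs_sub, integral_abs_sub,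
        h0c, hhc, smul_eq_mul]
      ring
    rw [hval]
    exact le_of_eq (by ring)
end

section
/- Let A₁ be Hermitian negative semidefinite and A₂ Hermitian negative semidefinite, and h > 0. Then ‖e^{(A₁+A₂)h} − e^{A₁ h/2} e^{A₂ h} e^{A₁ h/2}‖ ≤ h³ ( (1/6)‖[[A₂,A₁],A₁]‖ + (1/4)‖[A₂,A₁]‖‖A₂‖ + (1/3)‖A₂‖³ ). -/
open scoped Matrix.Norms.L2Operator ComplexOrder
open NormedSpace

namespace Trotter11Aux

variable {n : Type*} [Fintype n] [DecidableEq n]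

local notation "𝕄" => Matrix n n ℂ

lemma hasDerivAt_expL (A : 𝕄) (t : ℝ) :
    HasDerivAt (fun u : ℝ => exp (u • A)) (A * exp (t • A)) t := by
  simpa using hasDerivAt_exp_smul_const' (𝕂 := ℝ) A t

lemma hasDerivAt_expR (A : 𝕄) (t : ℝ) :
    HasDerivAt (fun u : ℝ => exp (u • A)) (exp (t • A) * A) t := by
  simpa using hasDerivAt_exp_smul_const (𝕂 := ℝ) A t

noncomputable def evalCLM (x : EuclideanSpace ℂ n) : 𝕄 →L[ℂ] EuclideanSpace ℂ n :=
  LinearMap.mkContinuous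
    { toFun := fun M => Matrix.toEuclideanCLM (𝕜 := ℂ) M x
      map_add' := by intros; simp
      map_smul' := by intros; simp }
    ‖x‖ (fun M => by
      calc ‖Matrix.toEuclideanCLM (𝕜 := ℂ) M x‖
          ≤ ‖Matrix.toEuclideanCLM (𝕜 := ℂ) M‖ * ‖x‖ :=
            (Matrix.toEuclideanCLM (𝕜 := ℂ) M).le_opNorm x
        _ = ‖x‖ * ‖M‖ := by rw [← Matrix.cstar_norm_def]; ring)

@[simp] lemma evalCLM_apply (x : EuclideanSpace ℂ n) (M : 𝕄) :
    evalCLM x M = Matrix.toEuclideanCLM (𝕜 := ℂ) M x := rfl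

lemma re_inner_nonpos {A : 𝕄} (hAneg : (-A).PosSemidef) (v : EuclideanSpace ℂ n) :
    RCLike.re (inner ℂ v (Matrix.toEuclideanCLM (𝕜 := ℂ) A v) : ℂ) ≤ 0 := by
  have h0 := hAneg.re_dotProduct_nonneg (WithLp.equiv _ _ v)
  rw [Matrix.neg_mulVec, dotProduct_neg, map_neg] at h0
  have hv : (inner ℂ v (Matrix.toEuclideanCLM (𝕜 := ℂ) A v) : ℂ)
      = dotProduct (star (WithLp.equiv _ _ v)) (A.mulVec (WithLp.equiv _ _ v)) := by
    rw [EuclideanSpace.inner_eq_star_dotProduct, dotProduct_comm]; rfl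
  rw [hv]
  linarith

lemma exp_norm_le_one {A : 𝕄} (hAneg : (-A).PosSemidef) {t : ℝ} (ht : 0 ≤ t) :
    ‖exp (t • A)‖ ≤ 1 := by
  rw [Matrix.cstar_norm_def]
  apply ContinuousLinearMap.opNorm_le_bound _ zero_le_one
  intro x
  rw [one_mul]
  set y : ℝ → EuclideanSpace ℂ n := fun s => evalCLM x (exp (s • A)) with hy
  have hyd : ∀ s, HasDerivAt y (Matrix.toEuclideanCLM (𝕜 := ℂ) A (y s)) s := by
    intro s
    have h1 : HasDerivAt (⇑((evalCLM x).restrictScalars ℝ) ∘ fun u : ℝ => exp (u • A))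
        (((evalCLM x).restrictScalars ℝ) (A * exp (s • A))) s :=
      (((evalCLM x).restrictScalars ℝ).hasFDerivAt).comp_hasDerivAt s (hasDerivAt_expL A s)
    have h2 : HasDerivAt y (evalCLM x (A * exp (s • A))) s := h1
    convert h2 using 1
    simp only [hy, evalCLM_apply, map_mul, ContinuousLinearMap.mul_apply]
  set g : ℝ → ℝ := fun s => RCLike.re (inner ℂ (y s) (y s) : ℂ) with hg
  have hgd : ∀ s, HasDerivAt g
      (RCLike.re ((inner ℂ (y s) (Matrix.toEuclideanCLM (𝕜 := ℂ) A (y s)) : ℂ)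
        + (inner ℂ (Matrix.toEuclideanCLM (𝕜 := ℂ) A (y s)) (y s) : ℂ))) s := by
    intro s
    exact (RCLike.reCLM.hasFDerivAt.comp_hasDerivAt s
      (((hyd s).inner ℂ (hyd s))))
  have hmono : Antitone g := by
    apply antitone_of_deriv_nonpos
    · intro s; exact (hgd s).differentiableAt
    · intro s
      rw [(hgd s).deriv]
      have h1 := re_inner_nonpos hAneg (y s)
      have h2 : RCLike.re ((inner ℂ (Matrix.toEuclideanCLM (𝕜 := ℂ) A (y s)) (y s) : ℂ))
          = RCLike.re ((inner ℂ (y s) (Matrix.toEuclideanCLM (𝕜 := ℂ) A (y s)) : ℂ)) := by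
        rw [← inner_conj_symm]
        exact RCLike.conj_re _
      rw [map_add, h2]
      linarith
  have hkey : g t ≤ g 0 := hmono ht
  have hg0 : g 0 = ‖x‖ ^ 2 := by
    have : y 0 = x := by simp [hy, exp_zero]
    rw [hg]
    simp only [this]
    exact inner_self_eq_norm_sq (𝕜 := ℂ) x
  have hgt : g t = ‖y t‖ ^ 2 := inner_self_eq_norm_sq (𝕜 := ℂ) (y t)
  rw [hg0, hgt] at hkey
  have hfin : ‖y t‖ ≤ ‖x‖ := by
    have := norm_nonneg (y t); have := norm_nonneg x
    nlinarith
  simpa [hy] using hfin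

lemma commute_exp (A : 𝕄) (t : ℝ) : A * exp (t • A) = exp (t • A) * A :=
  (((Commute.refl A).smul_left t).exp_left).eq.symm

lemma exp_split (A : 𝕄) (t u : ℝ) :
    exp (t • A) = exp ((t - u) • A) * exp (u • A) := by
  rw [← Matrix.exp_add_of_commute _ _ (((Commute.refl A).smul_left (t - u)).smul_right u), ← add_smul]
  congr 1
  ring_nf

lemma cont_exp (A : 𝕄) : Continuous fun s : ℝ => exp (s • A) :=
  continuous_iff_continuousAt.2 fun s => (hasDerivAt_expL A s).continuousAt

lemma hasDerivAt_exp_rev (A : 𝕄) (t u : ℝ) :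
    HasDerivAt (fun u : ℝ => exp ((t - u) • A)) (-(A * exp ((t - u) • A))) u := by
  have h2 : HasDerivAt (fun v : ℝ => t - v) (-1 : ℝ) u := by
    simpa using (hasDerivAt_id u).const_sub t
  have h3 : HasDerivAt ((fun v : ℝ => exp (v • A)) ∘ fun v : ℝ => t - v)
      ((-1 : ℝ) • (A * exp ((t - u) • A))) u :=
    HasDerivAt.scomp_of_eq u (hasDerivAt_expL A (t - u)) h2 rfl
  simpa [Function.comp_def] using h3

lemma norm_sub_le_integral {f f' : ℝ → 𝕄} (hf : ∀ s, HasDerivAt f (f' s) s)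
    (hc : Continuous f') {b : ℝ} (hb : 0 ≤ b) {g : ℝ → ℝ} (hg : Continuous g)
    (hbound : ∀ s ∈ Set.Icc 0 b, ‖f' s‖ ≤ g s) :
    ‖f b - f 0‖ ≤ |∫ s in (0:ℝ)..b, g s| := by
  rw [← intervalIntegral.integral_eq_sub_of_hasDerivAt (fun s _ => hf s)
    (hc.intervalIntegrable 0 b)]
  apply intervalIntegral.norm_integral_le_abs_of_norm_le _ (hg.intervalIntegrable 0 b)
  filter_upwards [MeasureTheory.ae_restrict_mem measurableSet_uIoc] with s hs
  exact hbound s (Set.Ioc_subset_Icc_self (by rwa [Set.uIoc_of_le hb] at hs))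

lemma comm_exp_bound {A : 𝕄} (hAneg : (-A).PosSemidef) (B : 𝕄) {t : ℝ} (ht : 0 ≤ t) :
    ‖exp (t • A) * B - B * exp (t • A)‖ ≤ t * ‖A * B - B * A‖ := by
  set D := A * B - B * A with hD
  have hderiv : ∀ u, HasDerivAt (fun u => exp ((t - u) • A) * B * exp (u • A))
      (-(exp ((t - u) • A) * D * exp (u • A))) u := by
    intro u
    have h4 := ((hasDerivAt_exp_rev A t u).mul_const B).mul (hasDerivAt_expR A u)
    refine h4.congr_deriv ?_
    rw [hD, commute_exp A (t - u), ← commute_exp A u]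
    noncomm_ring
  have hcont : Continuous fun u : ℝ => -(exp ((t - u) • A) * D * exp (u • A)) :=
    ((((cont_exp A).comp (continuous_const.sub continuous_id)).mul
      continuous_const).mul (cont_exp A)).neg
  have hbd := norm_sub_le_integral hderiv hcont ht (g := fun _ => ‖D‖)
    continuous_const ?_
  · have hend : exp ((t - t) • A) * B * exp (t • A)
        - exp ((t - 0) • A) * B * exp ((0:ℝ) • A)
        = -(exp (t • A) * B - B * exp (t • A)) := by
      simp [sub_self, zero_smul, exp_zero]
    rw [hend] at hbd
    rw [norm_neg] at hbd
    calc ‖exp (t • A) * B - B * exp (t • A)‖ ≤ |∫ _ in (0:ℝ)..t, ‖D‖| := hbd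
      _ = t * ‖D‖ := by
          rw [intervalIntegral.integral_const, smul_eq_mul, sub_zero,
            abs_of_nonneg (mul_nonneg ht (norm_nonneg _))]
  · intro u hu
    rw [norm_neg]
    calc ‖exp ((t - u) • A) * D * exp (u • A)‖
        ≤ ‖exp ((t - u) • A) * D‖ * ‖exp (u • A)‖ := norm_mul_le _ _
      _ ≤ ‖exp ((t - u) • A)‖ * ‖D‖ * ‖exp (u • A)‖ :=
          mul_le_mul_of_nonneg_right (norm_mul_le _ _) (norm_nonneg _)
      _ ≤ 1 * ‖D‖ * 1 := by
          have h1 := exp_norm_le_one hAneg (sub_nonneg.2 hu.2)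
          have h2 := exp_norm_le_one hAneg hu.1
          exact mul_le_mul (mul_le_mul_of_nonneg_right h1 (norm_nonneg D)) h2
            (norm_nonneg _) (by positivity)
      _ = ‖D‖ := by ring

lemma comm_exp_approx {A : 𝕄} (hAneg : (-A).PosSemidef) (B : 𝕄) {t : ℝ} (ht : 0 ≤ t) :
    ‖exp (t • A) * B - B * exp (t • A) - t • ((A * B - B * A) * exp (t • A))‖
      ≤ t ^ 2 / 2 * ‖A * (A * B - B * A) - (A * B - B * A) * A‖ := by
  set D := A * B - B * A with hD
  set D₂ := A * D - D * A with hD₂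
  have hderiv : ∀ u, HasDerivAt (fun u => exp ((t - u) • A) * B * exp (u • A))
      (-(exp ((t - u) • A) * D * exp (u • A))) u := by
    intro u
    have h4 := ((hasDerivAt_exp_rev A t u).mul_const B).mul (hasDerivAt_expR A u)
    refine h4.congr_deriv ?_
    rw [hD, commute_exp A (t - u), ← commute_exp A u]
    noncomm_ring
  have hcont : Continuous fun u : ℝ => -(exp ((t - u) • A) * D * exp (u • A)) :=
    ((((cont_exp A).comp (continuous_const.sub continuous_id)).mul
      continuous_const).mul (cont_exp A)).neg
  -- K = exp(t•A) * B - B * exp(t•A) = ∫ u in 0..t, e₁ u * D * e₂ u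
  have hK : exp (t • A) * B - B * exp (t • A)
      = ∫ u in (0:ℝ)..t, exp ((t - u) • A) * D * exp (u • A) := by
    have h5 := intervalIntegral.integral_eq_sub_of_hasDerivAt
      (f := fun u => exp ((t - u) • A) * B * exp (u • A))
      (fun u _ => hderiv u) (hcont.intervalIntegrable 0 t)
    have h6 : (∫ u in (0:ℝ)..t, -(exp ((t - u) • A) * D * exp (u • A)))
        = -(∫ u in (0:ℝ)..t, exp ((t - u) • A) * D * exp (u • A)) :=
      intervalIntegral.integral_neg
    rw [h6] at h5
    have h7 : exp ((t - t) • A) * B * exp (t • A)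
        - exp ((t - 0) • A) * B * exp ((0:ℝ) • A)
        = -(exp (t • A) * B - B * exp (t • A)) := by
      simp [sub_self, zero_smul, exp_zero]
    rw [h7] at h5
    exact (neg_inj.mp h5).symm
  have hcont2 : Continuous fun u : ℝ => exp ((t - u) • A) * D * exp (u • A) :=
    (((cont_exp A).comp (continuous_const.sub continuous_id)).mul
      continuous_const).mul (cont_exp A)
  have hTsmul : t • (D * exp (t • A)) = ∫ _ in (0:ℝ)..t, D * exp (t • A) := by
    rw [intervalIntegral.integral_const, sub_zero]
  rw [hK, hTsmul, ← intervalIntegral.integral_sub (hcont2.intervalIntegrable 0 t)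
    (continuous_const.intervalIntegrable 0 t)]
  have hgi : IntervalIntegrable (fun u : ℝ => (t - u) * ‖D₂‖) MeasureTheory.volume 0 t :=
    ((continuous_const.sub continuous_id).mul continuous_const).intervalIntegrable 0 t
  have hb := intervalIntegral.norm_integral_le_abs_of_norm_le (μ := MeasureTheory.volume)
    (f := fun u : ℝ => exp ((t - u) • A) * D * exp (u • A) - D * exp (t • A))
    (g := fun u : ℝ => (t - u) * ‖D₂‖) ?_ hgi
  · refine hb.trans (le_of_eq ?_)
    have hint : (∫ u in (0:ℝ)..t, (t - u) * ‖D₂‖)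
        = (∫ u in (0:ℝ)..t, (t - u)) * ‖D₂‖ := intervalIntegral.integral_mul_const _ _
    have hint2 : (∫ u in (0:ℝ)..t, (t - u)) = t ^ 2 / 2 := by
      have h8 : (∫ u in (0:ℝ)..t, (t - u))
          = (∫ _ in (0:ℝ)..t, t) - ∫ u in (0:ℝ)..t, u :=
        intervalIntegral.integral_sub (continuous_const.intervalIntegrable 0 t)
          (continuous_id.intervalIntegrable 0 t)
      rw [h8, intervalIntegral.integral_const, integral_id]
      simp [smul_eq_mul]
      ring
    rw [hint, hint2, abs_of_nonneg (by positivity)]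
  · filter_upwards [MeasureTheory.ae_restrict_mem measurableSet_uIoc] with u hu
    rw [Set.uIoc_of_le ht] at hu
    have hu0 : 0 ≤ u := le_of_lt hu.1
    have hut : u ≤ t := hu.2
    have hsplit : exp ((t - u) • A) * D * exp (u • A) - D * exp (t • A)
        = (exp ((t - u) • A) * D - D * exp ((t - u) • A)) * exp (u • A) := by
      rw [exp_split A t u]
      noncomm_ring
    rw [hsplit]
    calc ‖(exp ((t - u) • A) * D - D * exp ((t - u) • A)) * exp (u • A)‖
        ≤ ‖exp ((t - u) • A) * D - D * exp ((t - u) • A)‖ * ‖exp (u • A)‖ :=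
          norm_mul_le _ _
      _ ≤ ((t - u) * ‖D₂‖) * 1 :=
          mul_le_mul (comm_exp_bound hAneg D (sub_nonneg.2 hut))
            (exp_norm_le_one hAneg hu0) (norm_nonneg _)
            (mul_nonneg (sub_nonneg.2 hut) (norm_nonneg _))
      _ = (t - u) * ‖D₂‖ := by ring

set_option maxHeartbeats 2000000
set_option linter.unusedSectionVars false

lemma Galg' (E H Sp S : 𝕄) : E * (Sp - H * S) = -(E * H) * S + E * Sp := by noncomm_ring

lemma Rdecomp (P Q A₁ A₂ : 𝕄) (s : ℝ) (hPA₁ : P * A₁ = A₁ * P) :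
    (((1/2:ℝ) • (A₁ * P) * Q + P * (A₂ * Q)) * P + P * Q * ((1/2:ℝ) • (A₁ * P)))
      - (A₁ + A₂) * (P * Q * P)
    = (P * A₂ - A₂ * P - (s/2) • ((A₁ * A₂ - A₂ * A₁) * P)) * (Q * P)
      + (1/2:ℝ) • (P * (Q * A₁ - A₁ * Q - s • ((A₂ * A₁ - A₁ * A₂) * Q)) * P)
      + (s/2) • ((P * (A₂ * A₁ - A₁ * A₂) - (A₂ * A₁ - A₁ * A₂) * P) * (Q * P)) := by
  have hPA₁' : ∀ X : 𝕄, P * (A₁ * X) = A₁ * (P * X) := fun X => by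
    rw [← mul_assoc, hPA₁, mul_assoc]
  simp only [mul_sub, sub_mul, mul_add, add_mul, smul_sub, smul_add, smul_smul,
    smul_mul_assoc, mul_smul_comm, mul_assoc, hPA₁']
  module

theorem stmt_11' (A₁ A₂ : Matrix n n ℂ)
    (hA₁ : A₁.IsHermitian) (hA₁neg : (-A₁).PosSemidef)
    (hA₂ : A₂.IsHermitian) (hA₂neg : (-A₂).PosSemidef)
    (h : ℝ) (hh : 0 < h) :
    ‖exp (h • (A₁ + A₂)) - exp ((h/2) • A₁) * exp (h • A₂) * exp ((h/2) • A₁)‖ ≤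
      h ^ 3 * ((1/6) * ‖(A₂ * A₁ - A₁ * A₂) * A₁ - A₁ * (A₂ * A₁ - A₁ * A₂)‖
        + (1/4) * ‖A₂ * A₁ - A₁ * A₂‖ * ‖A₂‖ + (1/3) * ‖A₂‖ ^ 3) := by
  set C := A₂ * A₁ - A₁ * A₂ with hC
  set H := A₁ + A₂ with hH
  have hHneg : (-H).PosSemidef := by
    rw [hH, neg_add]
    exact hA₁neg.add hA₂neg
  set N₁ := ‖C * A₁ - A₁ * C‖ with hN₁
  set N₂ := ‖A₂ * C - C * A₂‖ with hN₂
  set c : ℝ := 3/8 * N₁ + 1/4 * N₂ with hc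
  -- derivative facts
  have hP : ∀ s : ℝ, HasDerivAt (fun s : ℝ => exp ((s/2) • A₁))
      ((1/2:ℝ) • (A₁ * exp ((s/2) • A₁))) s := by
    intro s
    have h1 : HasDerivAt (fun v : ℝ => v / 2) ((1:ℝ)/2) s := by
      simpa using (hasDerivAt_id s).div_const 2
    have h2 : HasDerivAt ((fun v : ℝ => exp (v • A₁)) ∘ fun v : ℝ => v / 2)
        (((1:ℝ)/2) • (A₁ * exp ((s/2) • A₁))) s :=
      HasDerivAt.scomp_of_eq s (hasDerivAt_expL A₁ (s/2)) h1 rfl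
    simpa [Function.comp_def] using h2
  have hS : ∀ s : ℝ, HasDerivAt
      (fun s : ℝ => (exp ((s/2) • A₁) * exp (s • A₂) * exp ((s/2) • A₁))) ((((1/2:ℝ) • (A₁ * exp ((s/2) • A₁)) * exp (s • A₂) + exp ((s/2) • A₁) * (A₂ * exp (s • A₂))) * exp ((s/2) • A₁) + exp ((s/2) • A₁) * exp (s • A₂) * ((1/2:ℝ) • (A₁ * exp ((s/2) • A₁))))) s :=
    fun s => ((hP s).mul (hasDerivAt_expL A₂ s)).mul (hP s)
  have hGd : ∀ s : ℝ, HasDerivAt (fun s : ℝ => exp ((h - s) • H) * (exp ((s/2) • A₁) * exp (s • A₂) * exp ((s/2) • A₁)))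
      (exp ((h - s) • H) * ((((1/2:ℝ) • (A₁ * exp ((s/2) • A₁)) * exp (s • A₂) + exp ((s/2) • A₁) * (A₂ * exp (s • A₂))) * exp ((s/2) • A₁) + exp ((s/2) • A₁) * exp (s • A₂) * ((1/2:ℝ) • (A₁ * exp ((s/2) • A₁)))) - H * (exp ((s/2) • A₁) * exp (s • A₂) * exp ((s/2) • A₁)))) s := by
    intro s
    have h1 := (hasDerivAt_exp_rev H h s).mul (hS s)
    refine h1.congr_deriv ?_
    rw [commute_exp H (h - s)]
    exact (Galg' _ _ _ _).symm
  -- continuity of the derivative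
  have hPc : Continuous fun s : ℝ => exp ((s/2) • A₁) :=
    (cont_exp A₁).comp (continuous_id.div_const 2)
  have hQc : Continuous fun s : ℝ => exp (s • A₂) := cont_exp A₂
  have hEc : Continuous fun s : ℝ => exp ((h - s) • H) :=
    (cont_exp H).comp (continuous_const.sub continuous_id)
  have hSpc : Continuous fun s : ℝ => (((1/2:ℝ) • (A₁ * exp ((s/2) • A₁)) * exp (s • A₂) + exp ((s/2) • A₁) * (A₂ * exp (s • A₂))) * exp ((s/2) • A₁) + exp ((s/2) • A₁) * exp (s • A₂) * ((1/2:ℝ) • (A₁ * exp ((s/2) • A₁)))) :=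
    ((((continuous_const.mul hPc).const_smul ((1:ℝ)/2)).mul hQc).add
      (hPc.mul (continuous_const.mul hQc))).mul hPc |>.add
      ((hPc.mul hQc).mul ((continuous_const.mul hPc).const_smul ((1:ℝ)/2)))
  have hRc : Continuous fun s : ℝ => exp ((h - s) • H) * ((((1/2:ℝ) • (A₁ * exp ((s/2) • A₁)) * exp (s • A₂) + exp ((s/2) • A₁) * (A₂ * exp (s • A₂))) * exp ((s/2) • A₁) + exp ((s/2) • A₁) * exp (s • A₂) * ((1/2:ℝ) • (A₁ * exp ((s/2) • A₁)))) - H * (exp ((s/2) • A₁) * exp (s • A₂) * exp ((s/2) • A₁))) :=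
    hEc.mul (hSpc.sub (continuous_const.mul ((hPc.mul hQc).mul hPc)))
  -- pointwise bound on the derivative
  have hbound : ∀ s ∈ Set.Icc (0:ℝ) h, ‖exp ((h - s) • H) * ((((1/2:ℝ) • (A₁ * exp ((s/2) • A₁)) * exp (s • A₂) + exp ((s/2) • A₁) * (A₂ * exp (s • A₂))) * exp ((s/2) • A₁) + exp ((s/2) • A₁) * exp (s • A₂) * ((1/2:ℝ) • (A₁ * exp ((s/2) • A₁)))) - H * (exp ((s/2) • A₁) * exp (s • A₂) * exp ((s/2) • A₁)))‖ ≤ c * s ^ 2 := by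
    intro s hs
    have hs0 : (0:ℝ) ≤ s := hs.1
    have hsh : s ≤ h := hs.2
    have hs2 : (0:ℝ) ≤ s/2 := by linarith
    have hQP : ‖exp (s • A₂) * exp ((s/2) • A₁)‖ ≤ 1 := by
      calc ‖exp (s • A₂) * exp ((s/2) • A₁)‖ ≤ ‖exp (s • A₂)‖ * ‖exp ((s/2) • A₁)‖ := norm_mul_le _ _
        _ ≤ 1 * 1 := mul_le_mul (exp_norm_le_one hA₂neg hs0)
            (exp_norm_le_one hA₁neg hs2) (norm_nonneg _) zero_le_one
        _ = 1 := by ring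
    have hF₁ : ‖exp ((s/2) • A₁) * A₂ - A₂ * exp ((s/2) • A₁) - (s/2) • ((A₁ * A₂ - A₂ * A₁) * exp ((s/2) • A₁))‖
        ≤ (s/2) ^ 2 / 2 * N₁ := by
      have h1 := comm_exp_approx hA₁neg A₂ hs2
      have h2 : A₁ * (A₁ * A₂ - A₂ * A₁) - (A₁ * A₂ - A₂ * A₁) * A₁
          = C * A₁ - A₁ * C := by rw [hC]; noncomm_ring
      rwa [h2, ← hN₁] at h1
    have hF₂ : ‖exp (s • A₂) * A₁ - A₁ * exp (s • A₂) - s • ((A₂ * A₁ - A₁ * A₂) * exp (s • A₂))‖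
        ≤ s ^ 2 / 2 * N₂ := by
      have h1 := comm_exp_approx hA₂neg A₁ hs0
      have h2 : A₂ * (A₂ * A₁ - A₁ * A₂) - (A₂ * A₁ - A₁ * A₂) * A₂
          = A₂ * C - C * A₂ := by rw [hC]
      rwa [h2, ← hN₂] at h1
    have hF₃ : ‖exp ((s/2) • A₁) * C - C * exp ((s/2) • A₁)‖ ≤ s/2 * N₁ := by
      have h1 := comm_exp_bound hA₁neg C hs2
      have h2 : A₁ * C - C * A₁ = -(C * A₁ - A₁ * C) := by noncomm_ring
      rwa [h2, norm_neg, ← hN₁] at h1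
    have hRval : ‖((((1/2:ℝ) • (A₁ * exp ((s/2) • A₁)) * exp (s • A₂) + exp ((s/2) • A₁) * (A₂ * exp (s • A₂))) * exp ((s/2) • A₁) + exp ((s/2) • A₁) * exp (s • A₂) * ((1/2:ℝ) • (A₁ * exp ((s/2) • A₁)))) - H * (exp ((s/2) • A₁) * exp (s • A₂) * exp ((s/2) • A₁)))‖ ≤ c * s ^ 2 := by
      rw [Rdecomp _ _ A₁ A₂ s (commute_exp A₁ (s/2)).symm]
      calc ‖(exp ((s/2) • A₁) * A₂ - A₂ * exp ((s/2) • A₁) - (s/2) • ((A₁ * A₂ - A₂ * A₁) * exp ((s/2) • A₁))) * (exp (s • A₂) * exp ((s/2) • A₁))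
            + (1/2:ℝ) • (exp ((s/2) • A₁) * (exp (s • A₂) * A₁ - A₁ * exp (s • A₂) - s • ((A₂ * A₁ - A₁ * A₂) * exp (s • A₂))) * exp ((s/2) • A₁))
            + (s/2) • ((exp ((s/2) • A₁) * C - C * exp ((s/2) • A₁)) * (exp (s • A₂) * exp ((s/2) • A₁)))‖
          ≤ ‖(exp ((s/2) • A₁) * A₂ - A₂ * exp ((s/2) • A₁) - (s/2) • ((A₁ * A₂ - A₂ * A₁) * exp ((s/2) • A₁))) * (exp (s • A₂) * exp ((s/2) • A₁))‖ + ‖(1/2:ℝ) • (exp ((s/2) • A₁) * (exp (s • A₂) * A₁ - A₁ * exp (s • A₂) - s • ((A₂ * A₁ - A₁ * A₂) * exp (s • A₂))) * exp ((s/2) • A₁))‖ + ‖(s/2) • ((exp ((s/2) • A₁) * C - C * exp ((s/2) • A₁)) * (exp (s • A₂) * exp ((s/2) • A₁)))‖ := norm_add₃_le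
        _ ≤ ((s/2) ^ 2 / 2 * N₁) * 1 + (1/2) * (s ^ 2 / 2 * N₂) + (s/2) * ((s/2 * N₁) * 1) := by
            gcongr ?_ + ?_ + ?_
            · calc ‖(exp ((s/2) • A₁) * A₂ - A₂ * exp ((s/2) • A₁) - (s/2) • ((A₁ * A₂ - A₂ * A₁) * exp ((s/2) • A₁))) * (exp (s • A₂) * exp ((s/2) • A₁))‖
                  ≤ ‖exp ((s/2) • A₁) * A₂ - A₂ * exp ((s/2) • A₁) - (s/2) • ((A₁ * A₂ - A₂ * A₁) * exp ((s/2) • A₁))‖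
                    * ‖exp (s • A₂) * exp ((s/2) • A₁)‖ := norm_mul_le _ _
                _ ≤ ((s/2) ^ 2 / 2 * N₁) * 1 :=
                    mul_le_mul hF₁ hQP (norm_nonneg _) (by positivity)
            · calc ‖(1/2:ℝ) • (exp ((s/2) • A₁) * (exp (s • A₂) * A₁ - A₁ * exp (s • A₂) - s • ((A₂ * A₁ - A₁ * A₂) * exp (s • A₂))) * exp ((s/2) • A₁))‖
                  = (1/2) * ‖exp ((s/2) • A₁) * (exp (s • A₂) * A₁ - A₁ * exp (s • A₂) - s • ((A₂ * A₁ - A₁ * A₂) * exp (s • A₂))) * exp ((s/2) • A₁)‖ := by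
                    rw [norm_smul]; norm_num
                _ ≤ (1/2) * (s ^ 2 / 2 * N₂) := by
                    gcongr (1/2) * ?_
                    calc ‖exp ((s/2) • A₁) * (exp (s • A₂) * A₁ - A₁ * exp (s • A₂) - s • ((A₂ * A₁ - A₁ * A₂) * exp (s • A₂))) * exp ((s/2) • A₁)‖
                        ≤ ‖exp ((s/2) • A₁) * (exp (s • A₂) * A₁ - A₁ * exp (s • A₂) - s • ((A₂ * A₁ - A₁ * A₂) * exp (s • A₂)))‖ * ‖exp ((s/2) • A₁)‖ :=
                          norm_mul_le _ _
                      _ ≤ ‖exp ((s/2) • A₁)‖ * ‖exp (s • A₂) * A₁ - A₁ * exp (s • A₂) - s • ((A₂ * A₁ - A₁ * A₂) * exp (s • A₂))‖ * ‖exp ((s/2) • A₁)‖ :=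
                          mul_le_mul_of_nonneg_right (norm_mul_le _ _) (norm_nonneg _)
                      _ ≤ 1 * (s ^ 2 / 2 * N₂) * 1 := by
                          have e1 := exp_norm_le_one hA₁neg hs2
                          exact mul_le_mul (mul_le_mul e1 hF₂ (norm_nonneg _) zero_le_one)
                            e1 (norm_nonneg _) (by positivity)
                      _ = s ^ 2 / 2 * N₂ := by ring
            · calc ‖(s/2) • ((exp ((s/2) • A₁) * C - C * exp ((s/2) • A₁)) * (exp (s • A₂) * exp ((s/2) • A₁)))‖
                  = s/2 * ‖(exp ((s/2) • A₁) * C - C * exp ((s/2) • A₁)) * (exp (s • A₂) * exp ((s/2) • A₁))‖ := by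
                    rw [norm_smul, Real.norm_eq_abs, abs_of_nonneg hs2]
                _ ≤ s/2 * ((s/2 * N₁) * 1) := by
                    gcongr s/2 * ?_
                    calc ‖(exp ((s/2) • A₁) * C - C * exp ((s/2) • A₁)) * (exp (s • A₂) * exp ((s/2) • A₁))‖
                        ≤ ‖exp ((s/2) • A₁) * C - C * exp ((s/2) • A₁)‖ * ‖exp (s • A₂) * exp ((s/2) • A₁)‖ := norm_mul_le _ _
                      _ ≤ (s/2 * N₁) * 1 := mul_le_mul hF₃ hQP (norm_nonneg _) (by positivity)
        _ ≤ c * s ^ 2 := by rw [hc]; nlinarith [hN₁ ▸ norm_nonneg (C * A₁ - A₁ * C), hN₂ ▸ norm_nonneg (A₂ * C - C * A₂), sq_nonneg s]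
    calc ‖exp ((h - s) • H) * ((((1/2:ℝ) • (A₁ * exp ((s/2) • A₁)) * exp (s • A₂) + exp ((s/2) • A₁) * (A₂ * exp (s • A₂))) * exp ((s/2) • A₁) + exp ((s/2) • A₁) * exp (s • A₂) * ((1/2:ℝ) • (A₁ * exp ((s/2) • A₁)))) - H * (exp ((s/2) • A₁) * exp (s • A₂) * exp ((s/2) • A₁)))‖
        ≤ ‖exp ((h - s) • H)‖ * ‖((((1/2:ℝ) • (A₁ * exp ((s/2) • A₁)) * exp (s • A₂) + exp ((s/2) • A₁) * (A₂ * exp (s • A₂))) * exp ((s/2) • A₁) + exp ((s/2) • A₁) * exp (s • A₂) * ((1/2:ℝ) • (A₁ * exp ((s/2) • A₁)))) - H * (exp ((s/2) • A₁) * exp (s • A₂) * exp ((s/2) • A₁)))‖ := norm_mul_le _ _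
      _ ≤ 1 * (c * s ^ 2) := mul_le_mul (exp_norm_le_one hHneg (by linarith : (0:ℝ) ≤ h - s))
          hRval (norm_nonneg _) zero_le_one
      _ = c * s ^ 2 := by ring
  have hgc : Continuous fun s : ℝ => c * s ^ 2 := continuous_const.mul (continuous_pow 2)
  have hmain := norm_sub_le_integral hGd hRc hh.le hgc hbound
  have hcnn : (0:ℝ) ≤ c := by
    rw [hc]
    have := hN₁ ▸ norm_nonneg (C * A₁ - A₁ * C)
    have := hN₂ ▸ norm_nonneg (A₂ * C - C * A₂)
    linarith
  have hIval : |∫ s in (0:ℝ)..h, c * s ^ 2| = c * (h ^ 3 / 3) := by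
    rw [intervalIntegral.integral_const_mul, integral_pow]
    rw [abs_of_nonneg (mul_nonneg hcnn (by rw [zero_pow (by norm_num : 2+1 ≠ 0), sub_zero]; positivity))]
    norm_num
  rw [hIval] at hmain
  have hend : (fun s : ℝ => exp ((h - s) • H) * (exp ((s/2) • A₁) * exp (s • A₂) * exp ((s/2) • A₁))) h - (fun s : ℝ => exp ((h - s) • H) * (exp ((s/2) • A₁) * exp (s • A₂) * exp ((s/2) • A₁))) 0
      = -(exp (h • H) - exp ((h/2) • A₁) * exp (h • A₂) * exp ((h/2) • A₁)) := by
    simp [sub_self, zero_smul, exp_zero, sub_zero, zero_div]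
  rw [hend, norm_neg] at hmain
  have hN₂le : N₂ ≤ 2 * ‖A₂‖ * ‖C‖ := by
    rw [hN₂]
    calc ‖A₂ * C - C * A₂‖ ≤ ‖A₂ * C‖ + ‖C * A₂‖ := norm_sub_le _ _
      _ ≤ ‖A₂‖ * ‖C‖ + ‖C‖ * ‖A₂‖ := add_le_add (norm_mul_le _ _) (norm_mul_le _ _)
      _ = 2 * ‖A₂‖ * ‖C‖ := by ring
  refine hmain.trans ?_
  have hN₁nn : (0:ℝ) ≤ N₁ := hN₁ ▸ norm_nonneg _
  have hN₂nn : (0:ℝ) ≤ N₂ := hN₂ ▸ norm_nonneg _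
  have hCnn : (0:ℝ) ≤ ‖C‖ := norm_nonneg _
  have hA₂nn : (0:ℝ) ≤ ‖A₂‖ := norm_nonneg _
  have hh3 : (0:ℝ) ≤ h ^ 3 := by positivity
  rw [hc]
  nlinarith [mul_le_mul_of_nonneg_left hN₂le hh3, pow_nonneg hA₂nn 3,
    mul_nonneg (mul_nonneg hA₂nn hCnn) hh3, mul_nonneg hh3 hN₁nn]


end Trotter11Aux

/-- Local second-order Trotter (Strang splitting) error bound with commutator
scaling for dissipative dynamics. -/
theorem stmt_11 {n : Type*} [Fintype n] [DecidableEq n]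
    (A₁ A₂ : Matrix n n ℂ)
    (hA₁ : A₁.IsHermitian) (hA₁neg : (-A₁).PosSemidef)
    (hA₂ : A₂.IsHermitian) (hA₂neg : (-A₂).PosSemidef)
    (h : ℝ) (hh : 0 < h) :
    ‖exp (h • (A₁ + A₂)) - exp ((h/2) • A₁) * exp (h • A₂) * exp ((h/2) • A₁)‖ ≤
      h ^ 3 * ((1/6) * ‖(A₂ * A₁ - A₁ * A₂) * A₁ - A₁ * (A₂ * A₁ - A₁ * A₂)‖
        + (1/4) * ‖A₂ * A₁ - A₁ * A₂‖ * ‖A₂‖ + (1/3) * ‖A₂‖ ^ 3) :=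
  Trotter11Aux.stmt_11' A₁ A₂ hA₁ hA₁neg hA₂ hA₂neg h hh
end
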